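/- Let A be an n×n complex matrix and r ≥ 1 an integer. For i = 1,…,r let Z^{(i)} = diag(z₁^{(i)},…,z_n^{(i)}) be diagonal matrices in rn independent indeterminates. Then, as an identity of polynomials in x: Σ_{X ∈ P_r} χ[A_X](x) = (1/(r−1)!)^n · [∏_{m=1}^n (∂_{z_m^{(1)}} + ⋯ + ∂_{z_m^{(r)}})^{r−1}] applied to ∏_{i=1}^r det(Z^{(i)} − A), with all rn variables then set equal to x. -/

import Mathlib

open Polynomial Matrix

/-- The `r`-paving of `A` determined by the colouring `c : Fin n → Fin r`. -/
def paving {n r : ℕ} (A : Matrix (Fin n) (Fin n) ℂ) (c : Fin n → Fin r) :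
    Matrix (Fin n) (Fin n) ℂ :=
  Matrix.of fun i j => if c i = c j then A i j else 0

/-- The formal partial derivative `∂/∂z_m^{(i)}`, as a linear endomorphism of the
polynomial ring `ℂ[z_m^{(i)} : 1 ≤ m ≤ n, 1 ≤ i ≤ r]`. -/
noncomputable def pd {n r : ℕ} (v : Fin n × Fin r) :
    MvPolynomial (Fin n × Fin r) ℂ →ₗ[ℂ] MvPolynomial (Fin n × Fin r) ℂ :=
  (MvPolynomial.pderiv v).toLinearMap

/-- The matrix `Z^{(i)} - A` where `Z^{(i)} = diag(z₁^{(i)},…,z_n^{(i)})`. -/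
noncomputable def ZisubA {n r : ℕ} (A : Matrix (Fin n) (Fin n) ℂ) (i : Fin r) :
    Matrix (Fin n) (Fin n) (MvPolynomial (Fin n × Fin r) ℂ) :=
  Matrix.of fun a b => (if a = b then MvPolynomial.X (a, i) else 0) - MvPolynomial.C (A a b)


namespace SumPaving

open MvPolynomial Equiv Finset

theorem pderiv_comm {σ R : Type*} [CommRing R] (v w : σ) (p : MvPolynomial σ R) :
    pderiv v (pderiv w p) = pderiv w (pderiv v p) := by
  classical
  induction p using MvPolynomial.induction_on with
  | C a => simp [pderiv_C]
  | add p q hp hq => simp [hp, hq]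
  | mul_X p j hp =>
    simp only [pderiv_mul, map_add, hp]
    rcases eq_or_ne j v with rfl | hv <;> rcases eq_or_ne j w with rfl | hw <;>
      simp [pderiv_X, Pi.single_apply, *] <;> ring

variable {n r : ℕ}

/-- abbreviation for the ambient ring -/
abbrev MvR (n r : ℕ) := MvPolynomial (Fin n × Fin r) ℂ

noncomputable def Dop (m : Fin n) : MvR n r →ₗ[ℂ] MvR n r := ∑ i : Fin r, pd (m, i)

lemma Dop_apply (m : Fin n) (p : MvR n r) :
    Dop m p = ∑ i : Fin r, pderiv (m, i) p := by
  simp [Dop, pd]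

noncomputable def Fa (a : Fin n) (q : ℂ) (T : Finset (Fin r)) : MvR n r :=
  ∏ i ∈ T, (X (a, i) - MvPolynomial.C q)

lemma pderiv_Fa (v : Fin n × Fin r) (a : Fin n) (q : ℂ) (T : Finset (Fin r)) :
    pderiv v (Fa a q T) = if v.1 = a ∧ v.2 ∈ T then Fa a q (T.erase v.2) else 0 := by
  obtain ⟨m, i⟩ := v
  induction T using Finset.induction_on with
  | empty => simp [Fa]
  | @insert j s hj ih =>
    rw [Fa, Finset.prod_insert hj, pderiv_mul]
    have hXj : pderiv (m, i) (X (a, j) - MvPolynomial.C q : MvR n r)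
        = if (m, i) = (a, j) then 1 else 0 := by
      rcases eq_or_ne (m, i) ((a, j) : Fin n × Fin r) with h | h
      · simp [h]
      · rw [if_neg h, map_sub, pderiv_C, sub_zero, pderiv_X_of_ne (Ne.symm h)]
    rw [hXj, ← Fa, ih]
    by_cases hma : m = a
    · subst hma
      by_cases hij : i = j
      · subst hij
        simp [hj, Finset.erase_insert hj, Fa]
      · have hne : ((m, i) : Fin n × Fin r) ≠ (m, j) := by simp [hij]
        by_cases his : i ∈ s
        · have hins : ((insert j s).erase i : Finset (Fin r)) = insert j (s.erase i) :=
            Finset.erase_insert_of_ne (Ne.symm hij)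
          have hjn : j ∉ s.erase i := fun h => hj (Finset.mem_of_mem_erase h)
          simp [hne, his, hins, Fa, Finset.prod_insert hjn]
        · simp [hne, his, hij]
    · have : ((m, i) : Fin n × Fin r) ≠ (a, j) := by simp [hma]
      simp [this, hma]

lemma Dop_Fa (m a : Fin n) (q : ℂ) (T : Finset (Fin r)) :
    Dop m (Fa a q T) = if m = a then ∑ i ∈ T, Fa a q (T.erase i) else 0 := by
  rw [Dop_apply]
  simp only [pderiv_Fa]
  by_cases hma : m = a
  · subst hma
    simp only [if_pos rfl, true_and]
    rw [Finset.sum_ite_mem, Finset.univ_inter]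
    simp
  · simp [hma]


variable (A : Matrix (Fin n) (Fin n) ℂ)


lemma Dk_Fa_le (a : Fin n) (q : ℂ) :
    ∀ (k : ℕ) (T : Finset (Fin r)), T.card ≤ k →
      ((Dop a) ^ k) (Fa a q T) = if T.card = k then ((k.factorial : ℂ) • 1 : MvR n r) else 0 := by
  intro k
  induction k with
  | zero =>
    intro T hT
    rw [Nat.le_zero, Finset.card_eq_zero] at hT
    subst hT
    simp [Fa]
  | succ k ih =>
    intro T hT
    rw [pow_succ, Module.End.mul_apply, Dop_Fa, if_pos rfl, map_sum]
    have herase : ∀ i ∈ T, ((Dop a) ^ k) (Fa a q (T.erase i))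
        = if T.card - 1 = k then ((k.factorial : ℂ) • 1 : MvR n r) else 0 := by
      intro i hi
      rw [ih (T.erase i) (by rw [Finset.card_erase_of_mem hi]; omega),
        Finset.card_erase_of_mem hi]
    rw [Finset.sum_congr rfl herase]
    by_cases hc : T.card = k + 1
    · rw [if_pos hc, Finset.sum_const, hc]
      simp only [Nat.add_sub_cancel, if_pos rfl, if_true]
      rw [← Nat.cast_smul_eq_nsmul ℂ (k+1), smul_smul, Nat.factorial_succ]
      push_cast
      ring_nf
    · rw [if_neg hc]
      rcases Finset.eq_empty_or_nonempty T with rfl | hne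
      · simp
      · have h1 : ¬ (T.card - 1 = k) := by
          have := Finset.card_pos.mpr hne; omega
        simp [h1]

lemma Dk_Fa_eq (a : Fin n) (q : ℂ) :
    ∀ (k : ℕ) (T : Finset (Fin r)), T.card = k + 1 →
      ((Dop a) ^ k) (Fa a q T)
        = (k.factorial : ℂ) • ∑ j ∈ T, (X (a, j) - MvPolynomial.C q) := by
  intro k
  induction k with
  | zero =>
    intro T hT
    obtain ⟨j, rfl⟩ := Finset.card_eq_one.mp hT
    simp [Fa]
  | succ k ih =>
    intro T hT
    rw [pow_succ, Module.End.mul_apply, Dop_Fa, if_pos rfl, map_sum]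
    have herase : ∀ i ∈ T, ((Dop a) ^ k) (Fa a q (T.erase i))
        = (k.factorial : ℂ) • ∑ j ∈ T.erase i, (X (a, j) - MvPolynomial.C q) := by
      intro i hi
      exact ih (T.erase i) (by rw [Finset.card_erase_of_mem hi, hT]; omega)
    rw [Finset.sum_congr rfl herase]
    set S : MvR n r := ∑ j ∈ T, (X (a, j) - MvPolynomial.C q) with hS
    have hsub : ∀ i ∈ T, (∑ j ∈ T.erase i, (X (a, j) - MvPolynomial.C q) : MvR n r)
        = S - (X (a, i) - MvPolynomial.C q) := by
      intro i hi
      rw [hS, ← Finset.sum_erase_add T _ hi]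
      ring
    calc ∑ i ∈ T, (k.factorial : ℂ) • ∑ j ∈ T.erase i, (X (a, j) - MvPolynomial.C q)
        = ∑ i ∈ T, (k.factorial : ℂ) • (S - (X (a, i) - MvPolynomial.C q)) := by
          refine Finset.sum_congr rfl fun i hi => ?_
          rw [hsub i hi]
      _ = (k.factorial : ℂ) • (T.card • S - S) := by
          rw [← Finset.smul_sum, Finset.sum_sub_distrib, Finset.sum_const, ← hS]
      _ = ((k+1).factorial : ℂ) • S := by
          rw [hT]
          rw [succ_nsmul, add_sub_cancel_right, ← Nat.cast_smul_eq_nsmul ℂ (k+1), smul_smul,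
            Nat.factorial_succ]
          push_cast
          rw [mul_comm]

-- D^k of product with constant-like factor
lemma Dk_mul_right (m : Fin n) (k : ℕ) (p w : MvR n r)
    (hw : ∀ i : Fin r, pderiv (m, i) w = 0) :
    ((Dop m) ^ k) (p * w) = (((Dop m) ^ k) p) * w := by
  induction k generalizing p with
  | zero => simp
  | succ k ih =>
    rw [pow_succ', Module.End.mul_apply, Module.End.mul_apply, ih p, Dop_apply, Dop_apply]
    simp only [pderiv_mul, hw, mul_zero, add_zero, Finset.sum_mul]

lemma pderiv_prod_zero {ι : Type*} (v : Fin n × Fin r) (s : Finset ι) (f : ι → MvR n r)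
    (h : ∀ a ∈ s, pderiv v (f a) = 0) : pderiv v (∏ a ∈ s, f a) = 0 := by
  classical
  induction s using Finset.induction_on with
  | empty => simp
  | @insert j s hj ih =>
    rw [Finset.prod_insert hj, pderiv_mul, h j (Finset.mem_insert_self j s),
      ih (fun a ha => h a (Finset.mem_insert_of_mem ha))]
    ring

lemma pderiv_Dop_pow (v : Fin n × Fin r) (a : Fin n) (k : ℕ) :
    ∀ p : MvR n r, pderiv v p = 0 → pderiv v (((Dop a) ^ k) p) = 0 := by
  induction k with
  | zero => intro p hp; simpa using hp
  | succ k ih =>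
    intro p hp
    rw [pow_succ, Module.End.mul_apply]
    refine ih (Dop a p) ?_
    rw [Dop_apply, map_sum]
    refine Finset.sum_eq_zero fun i _ => ?_
    rw [pderiv_comm, hp, map_zero]


lemma split_ops (k : ℕ) (G : Fin n → MvR n r)
    (hG : ∀ (v : Fin n × Fin r) (a : Fin n), v.1 ≠ a → pderiv v (G a) = 0) :
    ∀ (l : List (Fin n)), l.Nodup →
      ((l.map (fun m => (Dop m) ^ k)).prod) (∏ a : Fin n, G a)
        = ∏ a : Fin n, (if a ∈ l then ((Dop a) ^ k) (G a) else G a) := by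
  intro l
  induction l with
  | nil => simp
  | cons m t ih =>
    intro hl
    have hm : m ∉ t := (List.nodup_cons.mp hl).1
    have ht : t.Nodup := (List.nodup_cons.mp hl).2
    rw [List.map_cons, List.prod_cons, Module.End.mul_apply, ih ht]
    set H : Fin n → MvR n r := fun a => if a ∈ t then ((Dop a) ^ k) (G a) else G a with hH
    have hHd : ∀ (v : Fin n × Fin r) (a : Fin n), v.1 ≠ a → pderiv v (H a) = 0 := by
      intro v a hva
      rw [hH]
      by_cases h : a ∈ t
      · simp only [if_pos h]
        exact pderiv_Dop_pow v a k (G a) (hG v a hva)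
      · simp only [if_neg h]
        exact hG v a hva
    rw [← Finset.mul_prod_erase Finset.univ H (Finset.mem_univ m)]
    rw [Dk_mul_right m k (H m) _ (fun i => pderiv_prod_zero (m, i) _ H
      (fun a ha => hHd (m, i) a (fun hc => (Finset.mem_erase.mp ha).1 hc.symm)))]
    rw [← Finset.mul_prod_erase Finset.univ
      (fun a => if a ∈ m :: t then ((Dop a) ^ k) (G a) else G a) (Finset.mem_univ m)]
    congr 1
    · simp only [hH, if_neg hm, if_pos (List.mem_cons_self)]
    · refine Finset.prod_congr rfl fun a ha => ?_
      have ham : a ≠ m := (Finset.mem_erase.mp ha).1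
      by_cases h : a ∈ t
      · simp only [hH, if_pos h, if_pos (List.mem_cons_of_mem m h)]
      · simp only [hH, if_neg h, if_neg (show a ∉ m :: t by simp [ham, h])]

noncomputable def gfun (σ : Fin r → Perm (Fin n)) (a : Fin n) : MvR n r :=
  ∏ i : Fin r, ((if σ i a = a then X (a, i) else 0) - MvPolynomial.C (A (σ i a) a))

def Tset (σ : Fin r → Perm (Fin n)) (a : Fin n) : Finset (Fin r) :=
  Finset.univ.filter fun i => σ i a = a

noncomputable def ebar (σ : Fin r → Perm (Fin n)) (i : Fin r) (a : Fin n) : Polynomial ℂ :=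
  if σ i a ≠ a ∧ ∀ j, j ≠ i → σ j a = a then -Polynomial.C (A (σ i a) a)
  else if ∀ j, σ j a = a then Polynomial.X - Polynomial.C (A a a) else 0

lemma gfun_eq (σ : Fin r → Perm (Fin n)) (a : Fin n) :
    gfun A σ a = Fa a (A a a) (Tset σ a)
      * MvPolynomial.C (∏ i ∈ (Tset σ a)ᶜ, (- A (σ i a) a)) := by
  rw [gfun, ← Finset.prod_filter_mul_prod_filter_not Finset.univ (fun i => σ i a = a)]
  congr 1
  · rw [Fa]
    refine Finset.prod_congr rfl fun i hi => ?_
    have h : σ i a = a := (Finset.mem_filter.mp hi).2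
    rw [if_pos h, h]
  · rw [map_prod]
    refine Finset.prod_congr ?_ fun i hi => ?_
    · ext i; simp [Tset, Finset.mem_compl, Finset.mem_filter]
    · have h : ¬ σ i a = a := by
        simpa [Tset, Finset.mem_compl, Finset.mem_filter] using hi
      rw [if_neg h, zero_sub, map_neg]

lemma key_lemma (hr : 1 ≤ r) (σ : Fin r → Perm (Fin n)) (a : Fin n) :
    aeval (fun _ : Fin n × Fin r => (Polynomial.X : Polynomial ℂ))
        (((Dop a) ^ (r - 1)) (gfun A σ a))
      = ((r - 1).factorial : ℂ) • ∑ i : Fin r, ebar A σ i a := by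
  have hTcard : (Tset σ a).card ≤ r := by
    simpa [Tset] using Finset.card_filter_le Finset.univ (fun i => σ i a = a)
  have hmem : ∀ i, i ∈ Tset σ a ↔ σ i a = a := by
    intro i; simp [Tset]
  have hcompl : ∀ i, i ∈ (Tset σ a)ᶜ ↔ ¬ σ i a = a := by
    intro i; simp [Tset]
  rw [gfun_eq, Dk_mul_right a (r-1) _ _ (fun i => pderiv_C)]
  by_cases huniv : Tset σ a = Finset.univ
  · have hc : (Tset σ a).card = (r - 1) + 1 := by
      rw [huniv, Finset.card_univ, Fintype.card_fin]; omega
    rw [Dk_Fa_eq a (A a a) (r-1) _ hc]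
    have hfix : ∀ i, σ i a = a := fun i => (hmem i).mp (huniv ▸ Finset.mem_univ i)
    have hco : (Tset σ a)ᶜ = ∅ := by rw [huniv, Finset.compl_univ]
    rw [hco, Finset.prod_empty, MvPolynomial.C_1, mul_one, _root_.map_smul, map_sum]
    congr 1
    rw [huniv]
    refine Finset.sum_congr rfl fun i _ => ?_
    rw [map_sub, MvPolynomial.aeval_X, MvPolynomial.aeval_C, Polynomial.algebraMap_eq]
    rw [show ebar A σ i a = Polynomial.X - Polynomial.C (A a a) by
      rw [ebar, if_neg (by simp [hfix i]), if_pos hfix]]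
  · have hlt : (Tset σ a).card < r := by
      rcases lt_or_eq_of_le hTcard with h | h
      · exact h
      · exact absurd (Finset.eq_univ_of_card _ (by rw [h, Fintype.card_fin])) huniv
    by_cases hcard : (Tset σ a).card = r - 1
    · rw [Dk_Fa_le a (A a a) (r-1) _ (le_of_eq hcard), if_pos hcard]
      have hcc : ((Tset σ a)ᶜ).card = 1 := by
        rw [Finset.card_compl, Fintype.card_fin, hcard]; omega
      obtain ⟨i₀, hi₀⟩ := Finset.card_eq_one.mp hcc
      have hmov : ¬ σ i₀ a = a := (hcompl i₀).mp (hi₀ ▸ Finset.mem_singleton_self i₀)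
      have hothers : ∀ j, j ≠ i₀ → σ j a = a := by
        intro j hj
        by_contra hc
        have : j ∈ (Tset σ a)ᶜ := (hcompl j).mpr hc
        rw [hi₀, Finset.mem_singleton] at this
        exact hj this
      rw [hi₀, Finset.prod_singleton, smul_mul_assoc, one_mul, _root_.map_smul]
      rw [Finset.sum_eq_single i₀ (fun i _ hii => by
            rw [ebar, if_neg (by simp [hothers i hii]), if_neg (by push_neg; exact ⟨i₀, hmov⟩)])
          (fun h => absurd (Finset.mem_univ i₀) h)]
      rw [ebar, if_pos ⟨hmov, hothers⟩]
      congr 1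
      rw [MvPolynomial.aeval_C, Polynomial.algebraMap_eq, map_neg]
    · have hle : (Tset σ a).card ≤ r - 1 := by omega
      rw [Dk_Fa_le a (A a a) (r-1) _ hle, if_neg hcard, zero_mul, map_zero]
      have hcc2 : 1 < ((Tset σ a)ᶜ).card := by
        rw [Finset.card_compl, Fintype.card_fin]; omega
      obtain ⟨x, hx, y, hy, hxy⟩ := Finset.one_lt_card.mp hcc2
      have hebar : ∀ i, ebar A σ i a = 0 := by
        intro i
        have hone : ∃ j, j ≠ i ∧ ¬ σ j a = a := by
          rcases eq_or_ne x i with rfl | hxi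
          · exact ⟨y, Ne.symm hxy, (hcompl y).mp hy⟩
          · exact ⟨x, hxi, (hcompl x).mp hx⟩
        obtain ⟨j, hji, hjm⟩ := hone
        rw [ebar, if_neg (by push_neg; intro _; exact ⟨j, hji, hjm⟩),
          if_neg (by push_neg; exact ⟨j, hjm⟩)]
      rw [Finset.sum_congr rfl fun i _ => hebar i, Finset.sum_const, smul_zero, smul_zero]

def GoodP (σ : Fin r → Perm (Fin n)) (c : Fin n → Fin r) : Prop :=
  ∀ a, (∀ i, σ i a = a) ∨ (σ (c a) a ≠ a ∧ ∀ j, j ≠ c a → σ j a = a)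

lemma supp_invariant (p : Perm (Fin n)) (a : Fin n) (h : p a ≠ a) : p (p a) ≠ p a :=
  fun he => h (p.injective he)

lemma good_fix (σ : Fin r → Perm (Fin n)) (c : Fin n → Fin r) (hg : GoodP σ c)
    {b : Fin n} {i : Fin r} (hb : σ i b ≠ b) : c b = i ∧ ∀ j, j ≠ i → σ j b = b := by
  rcases hg b with h | ⟨h1, h2⟩
  · exact absurd (h i) hb
  · rcases eq_or_ne (c b) i with h | h
    · exact ⟨h, h ▸ h2⟩
    · exact absurd (h2 i (fun hh => h hh.symm)) hb

lemma listprod_apply (σ : Fin r → Perm (Fin n)) (c : Fin n → Fin r) (hg : GoodP σ c) :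
    ∀ (l : List (Fin r)), l.Nodup → ∀ a : Fin n,
      ((l.map σ).prod) a = if c a ∈ l ∧ σ (c a) a ≠ a then σ (c a) a else a := by
  intro l
  induction l with
  | nil => intro _ a; simp
  | cons i t ih =>
    intro hl a
    have hm : i ∉ t := (List.nodup_cons.mp hl).1
    have ht := (List.nodup_cons.mp hl).2
    rw [List.map_cons, List.prod_cons, Equiv.Perm.mul_apply, ih ht a]
    by_cases K : c a ∈ t ∧ σ (c a) a ≠ a
    · rw [if_pos K]
      have hia : i ≠ c a := fun h => hm (h ▸ K.1)
      have hsb : σ (c a) (σ (c a) a) ≠ σ (c a) a := supp_invariant _ _ K.2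
      obtain ⟨hcb, hfix⟩ := good_fix σ c hg hsb
      rw [hfix i hia, if_pos ⟨List.mem_cons_of_mem i K.1, K.2⟩]
    · rw [if_neg K]
      by_cases hic : i = c a
      · rw [← hic]
        by_cases hmov : σ i a = a
        · rw [hmov, if_neg (fun hc => hc.2 rfl)]
        · rw [if_pos ⟨List.mem_cons_self, hmov⟩]
      · have hfixa : σ i a = a := by
          rcases hg a with h | ⟨_, h2⟩
          · exact h i
          · exact h2 i hic
        rw [hfixa, if_neg ?_]
        rintro ⟨hmem, hmov⟩
        rcases List.mem_cons.mp hmem with h | h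
        · exact hic h.symm
        · exact K ⟨h, hmov⟩

lemma ofFn_prod_apply (σ : Fin r → Perm (Fin n)) (c : Fin n → Fin r) (hg : GoodP σ c)
    (a : Fin n) : ((List.ofFn σ).prod) a = σ (c a) a := by
  rw [List.ofFn_eq_map, listprod_apply σ c hg _ (List.nodup_finRange r) a]
  by_cases h : σ (c a) a = a
  · rw [if_neg (fun hc => hc.2 h), h]
  · rw [if_pos ⟨List.mem_finRange _, h⟩]

lemma sign_ofFn_prod (σ : Fin r → Perm (Fin n)) :
    Equiv.Perm.sign ((List.ofFn σ).prod) = ∏ i : Fin r, Equiv.Perm.sign (σ i) := by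
  rw [map_list_prod Equiv.Perm.sign (List.ofFn σ), List.map_ofFn, List.prod_ofFn]
  rfl

def rPermX (c : Fin n → Fin r) (τ : Perm (Fin n)) (hcτ : ∀ a, τ a ≠ a → c (τ a) = c a)
    (i : Fin r) : Perm (Fin n) where
  toFun a := if τ a ≠ a ∧ c a = i then τ a else a
  invFun a := if τ⁻¹ a ≠ a ∧ c (τ⁻¹ a) = i then τ⁻¹ a else a
  left_inv a := by
    dsimp only
    by_cases h : τ a ≠ a ∧ c a = i
    · rw [if_pos h, if_pos ?_, (show ∀ x, τ⁻¹ (τ x) = x from τ.symm_apply_apply)]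
      rw [(show ∀ x, τ⁻¹ (τ x) = x from τ.symm_apply_apply)]
      exact ⟨fun hh => h.1 hh.symm, h.2⟩
    · rw [if_neg h, if_neg ?_]
      rintro ⟨h1, h2⟩
      have hτa : τ a ≠ a := by
        intro he
        apply h1
        rw [show τ⁻¹ a = τ⁻¹ (τ a) by rw [he], (show ∀ x, τ⁻¹ (τ x) = x from τ.symm_apply_apply)]
      have hmv : τ (τ⁻¹ a) ≠ τ⁻¹ a := by
        rw [(show ∀ x, τ (τ⁻¹ x) = x from τ.apply_symm_apply)]
        exact fun hh => h1 hh.symm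
      have := hcτ (τ⁻¹ a) hmv
      rw [(show ∀ x, τ (τ⁻¹ x) = x from τ.apply_symm_apply)] at this
      exact h ⟨hτa, this ▸ h2⟩
  right_inv a := by
    dsimp only
    by_cases h : τ⁻¹ a ≠ a ∧ c (τ⁻¹ a) = i
    · rw [if_pos h, if_pos ?_, (show ∀ x, τ (τ⁻¹ x) = x from τ.apply_symm_apply)]
      rw [(show ∀ x, τ (τ⁻¹ x) = x from τ.apply_symm_apply)]
      exact ⟨fun hh => h.1 hh.symm, h.2⟩
    · rw [if_neg h, if_neg ?_]
      rintro ⟨h1, h2⟩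
      have hτia : τ⁻¹ a ≠ a := by
        intro he
        apply h1
        rw [show τ a = τ (τ⁻¹ a) by rw [he], (show ∀ x, τ (τ⁻¹ x) = x from τ.apply_symm_apply)]
      have hmv : τ (τ⁻¹ a) ≠ τ⁻¹ a := by
        rw [(show ∀ x, τ (τ⁻¹ x) = x from τ.apply_symm_apply)]
        exact fun hh => hτia hh.symm
      have := hcτ (τ⁻¹ a) hmv
      rw [(show ∀ x, τ (τ⁻¹ x) = x from τ.apply_symm_apply)] at this
      exact h ⟨hτia, this ▸ h2⟩

lemma rPermX_apply (c : Fin n → Fin r) (τ : Perm (Fin n)) (hcτ) (i : Fin r) (a : Fin n) :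
    rPermX c τ hcτ i a = if τ a ≠ a ∧ c a = i then τ a else a := rfl


lemma bridge :
    ∑ c : Fin n → Fin r, ∑ τ : Perm (Fin n),
        ((Equiv.Perm.sign τ : ℤ) • ∏ a : Fin n, charmatrix (paving A c) (τ a) a)
      = ∑ σ : Fin r → Perm (Fin n), ∑ c : Fin n → Fin r,
          ((∏ i : Fin r, (Equiv.Perm.sign (σ i) : ℤ)) • ∏ a : Fin n, ebar A σ (c a) a) := by
  classical
  set F : (Fin n → Fin r) × Perm (Fin n) → Polynomial ℂ := fun p =>
    (Equiv.Perm.sign p.2 : ℤ) • ∏ a : Fin n, charmatrix (paving A p.1) (p.2 a) a with hF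
  set G : (Fin r → Perm (Fin n)) × (Fin n → Fin r) → Polynomial ℂ := fun q =>
    (∏ i : Fin r, (Equiv.Perm.sign (q.1 i) : ℤ)) • ∏ a : Fin n, ebar A q.1 (q.2 a) a with hG
  have hL : ∑ c : Fin n → Fin r, ∑ τ : Perm (Fin n),
      ((Equiv.Perm.sign τ : ℤ) • ∏ a : Fin n, charmatrix (paving A c) (τ a) a)
      = ∑ p : (Fin n → Fin r) × Perm (Fin n), F p := by
    rw [Fintype.sum_prod_type]
  have hR : ∑ σ : Fin r → Perm (Fin n), ∑ c : Fin n → Fin r,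
      ((∏ i : Fin r, (Equiv.Perm.sign (σ i) : ℤ)) • ∏ a : Fin n, ebar A σ (c a) a)
      = ∑ q : (Fin r → Perm (Fin n)) × (Fin n → Fin r), G q := by
    rw [Fintype.sum_prod_type]
  rw [hL, hR]
  have hbadF : ∀ p : (Fin n → Fin r) × Perm (Fin n),
      ¬ (∀ a, p.2 a ≠ a → p.1 (p.2 a) = p.1 a) → F p = 0 := by
    rintro ⟨c, τ⟩ hp
    push_neg at hp
    obtain ⟨a, ha1, ha2⟩ := hp
    rw [hF]
    have : charmatrix (paving A c) (τ a) a = 0 := by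
      rw [charmatrix_apply_ne _ _ _ ha1]
      have : paving A c (τ a) a = 0 := by
        simp only [paving, Matrix.of_apply, if_neg ha2]
      rw [this, map_zero, neg_zero]
    exact smul_eq_zero_of_right _ (Finset.prod_eq_zero (Finset.mem_univ a) this)
  have hbadG : ∀ q : (Fin r → Perm (Fin n)) × (Fin n → Fin r),
      ¬ GoodP q.1 q.2 → G q = 0 := by
    rintro ⟨σ, c⟩ hq
    rw [GoodP] at hq
    obtain ⟨a, ha⟩ := not_forall.mp hq
    rw [not_or] at ha
    obtain ⟨ha1, ha2⟩ := ha
    rw [hG]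
    have : ebar A σ (c a) a = 0 := by
      rw [ebar, if_neg ha2, if_neg ha1]
    exact smul_eq_zero_of_right _ (Finset.prod_eq_zero (Finset.mem_univ a) this)
  rw [← Finset.sum_filter_add_sum_filter_not Finset.univ
      (fun p : (Fin n → Fin r) × Perm (Fin n) => ∀ a, p.2 a ≠ a → p.1 (p.2 a) = p.1 a) F,
    ← Finset.sum_filter_add_sum_filter_not Finset.univ
      (fun q : (Fin r → Perm (Fin n)) × (Fin n → Fin r) => GoodP q.1 q.2) G,
    Finset.sum_eq_zero (fun p hp => hbadF p (Finset.mem_filter.mp hp).2),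
    Finset.sum_eq_zero (fun q hq => hbadG q (Finset.mem_filter.mp hq).2), add_zero, add_zero]
  refine Finset.sum_bij'
    (i := fun p hp => (rPermX p.1 p.2 (Finset.mem_filter.mp hp).2, p.1))
    (j := fun q hq => (q.2, (List.ofFn q.1).prod))
    (hi := ?_) (hj := ?_) (left_neg := ?_) (right_neg := ?_) (h := ?_)
  · -- hi : image is Good
    rintro ⟨c, τ⟩ hp
    rw [Finset.mem_filter]
    refine ⟨Finset.mem_univ _, ?_⟩
    intro a
    by_cases hfa : τ a = a
    · left
      intro i
      rw [rPermX_apply, if_neg (fun hc => hc.1 hfa)]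
    · right
      constructor
      · rw [rPermX_apply, if_pos ⟨hfa, rfl⟩]
        exact hfa
      · intro j hj
        rw [rPermX_apply, if_neg (fun hc => hj hc.2.symm)]
  · -- hj : image is Compat
    rintro ⟨σ, c⟩ hq
    have hg : GoodP σ c := (Finset.mem_filter.mp hq).2
    rw [Finset.mem_filter]
    refine ⟨Finset.mem_univ _, ?_⟩
    intro a ha
    rw [ofFn_prod_apply σ c hg a] at ha ⊢
    have hb : σ (c a) (σ (c a) a) ≠ σ (c a) a := supp_invariant _ _ ha
    exact (good_fix σ c hg hb).1
  · -- left_inv : j (i p) = p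
    rintro ⟨c, τ⟩ hp
    have hcτ := (Finset.mem_filter.mp hp).2
    have hg : GoodP (rPermX c τ hcτ) c := by
      intro a
      by_cases hfa : τ a = a
      · left; intro i; rw [rPermX_apply, if_neg (fun hc => hc.1 hfa)]
      · right
        refine ⟨?_, fun j hj => ?_⟩
        · rw [rPermX_apply, if_pos ⟨hfa, rfl⟩]; exact hfa
        · rw [rPermX_apply, if_neg (fun hc => hj hc.2.symm)]
    have hτ : (List.ofFn (rPermX c τ hcτ)).prod = τ := by
      refine Equiv.ext fun a => ?_
      rw [ofFn_prod_apply _ c hg a, rPermX_apply]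
      by_cases hfa : τ a = a
      · rw [if_neg (fun hc => hc.1 hfa), hfa]
      · rw [if_pos ⟨hfa, rfl⟩]
    dsimp only
    rw [hτ]
  · -- right_inv : i (j q) = q
    rintro ⟨σ, c⟩ hq
    have hg : GoodP σ c := (Finset.mem_filter.mp hq).2
    have hσ : ∀ hcτ', rPermX c ((List.ofFn σ).prod) hcτ' = σ := by
      intro hcτ'
      funext i
      refine Equiv.ext fun a => ?_
      rw [rPermX_apply, ofFn_prod_apply σ c hg a]
      by_cases hci : c a = i
      · subst hci
        by_cases hmov : σ (c a) a = a
        · rw [if_neg (fun hc => hc.1 hmov), hmov]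
        · rw [if_pos ⟨hmov, rfl⟩]
      · rw [if_neg (fun hc => hci hc.2)]
        rcases hg a with h | ⟨_, h2⟩
        · exact (h i).symm
        · exact (h2 i (fun hh => hci hh.symm)).symm
    dsimp only
    rw [hσ]
  · -- h : values agree
    rintro ⟨c, τ⟩ hp
    have hcτ := (Finset.mem_filter.mp hp).2
    rw [hF, hG]
    simp only
    have hg : GoodP (rPermX c τ hcτ) c := by
      intro a
      by_cases hfa : τ a = a
      · left; intro i; rw [rPermX_apply, if_neg (fun hc => hc.1 hfa)]
      · right
        refine ⟨?_, fun j hj => ?_⟩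
        · rw [rPermX_apply, if_pos ⟨hfa, rfl⟩]; exact hfa
        · rw [rPermX_apply, if_neg (fun hc => hj hc.2.symm)]
    have hτ : τ = (List.ofFn (rPermX c τ hcτ)).prod := by
      refine Equiv.ext fun a => ?_
      rw [ofFn_prod_apply _ c hg a, rPermX_apply]
      by_cases hfa : τ a = a
      · rw [if_neg (fun hc => hc.1 hfa), hfa]
      · rw [if_pos ⟨hfa, rfl⟩]
    have hsign : Equiv.Perm.sign τ = ∏ i : Fin r, Equiv.Perm.sign (rPermX c τ hcτ i) := by
      rw [congrArg Equiv.Perm.sign hτ, sign_ofFn_prod]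
    congr 1
    · rw [hsign]
      push_cast
      rfl
    · refine Finset.prod_congr rfl fun a _ => ?_
      by_cases hfa : τ a = a
      · rw [hfa, charmatrix_apply_eq]
        have h1 : paving A c a a = A a a := by simp [paving]
        have h2 : ebar A (rPermX c τ hcτ) (c a) a
            = Polynomial.X - Polynomial.C (A a a) := by
          rw [ebar, if_neg, if_pos]
          · intro j
            rw [rPermX_apply, if_neg (fun hc => hc.1 hfa)]
          · rw [rPermX_apply, if_neg (fun hc => hc.1 hfa)]
            simp
        rw [h1, h2]
      · rw [charmatrix_apply_ne _ _ _ hfa]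
        have hc' : c (τ a) = c a := hcτ a hfa
        have h1 : paving A c (τ a) a = A (τ a) a := by
          simp [paving, hc']
        have h2 : ebar A (rPermX c τ hcτ) (c a) a = -Polynomial.C (A (τ a) a) := by
          rw [ebar, if_pos]
          · rw [rPermX_apply, if_pos ⟨hfa, rfl⟩]
          · constructor
            · rw [rPermX_apply, if_pos ⟨hfa, rfl⟩]; exact hfa
            · intro j hj
              rw [rPermX_apply, if_neg (fun hc => hj hc.2.symm)]
        rw [h1, h2]

lemma LHS_reduce : ∑ c : Fin n → Fin r, (paving A c).charpoly
    = ∑ c : Fin n → Fin r, ∑ τ : Perm (Fin n),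
        ((Equiv.Perm.sign τ : ℤ) • ∏ a : Fin n, charmatrix (paving A c) (τ a) a) := by
  refine Finset.sum_congr rfl fun c _ => ?_
  rw [Matrix.charpoly, det_apply']
  refine Finset.sum_congr rfl fun τ _ => ?_
  rw [zsmul_eq_mul]

lemma RHS_reduce (hr : 1 ≤ r) :
    (((r-1).factorial : ℂ) ^ n)⁻¹ •
        MvPolynomial.aeval (fun _ : Fin n × Fin r => (Polynomial.X : Polynomial ℂ))
          (((List.ofFn (fun m : Fin n => (∑ i : Fin r, pd (m, i)) ^ (r-1))).prod)
            (∏ i : Fin r, (ZisubA A i).det))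
    = ∑ σ : Fin r → Perm (Fin n), ∑ c : Fin n → Fin r,
        ((∏ i : Fin r, (Equiv.Perm.sign (σ i) : ℤ)) • ∏ a : Fin n, ebar A σ (c a) a) := by
  classical
  have hop : (List.ofFn (fun m : Fin n => (∑ i : Fin r, pd (m, i)) ^ (r-1)))
      = List.ofFn (fun m : Fin n => (Dop m : MvR n r →ₗ[ℂ] MvR n r) ^ (r-1)) := rfl
  rw [hop]
  set opL : MvR n r →ₗ[ℂ] MvR n r
    := (List.ofFn (fun m : Fin n => (Dop m : MvR n r →ₗ[ℂ] MvR n r) ^ (r-1))).prod with hopL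
  have hdet : (∏ i : Fin r, (ZisubA A i).det)
      = ∑ σ : Fin r → Perm (Fin n),
          ∏ i : Fin r, (((Equiv.Perm.sign (σ i) : ℤ) : MvR n r)
            * ∏ a : Fin n, (ZisubA A i) (σ i a) a) := by
    rw [Finset.prod_congr rfl fun i _ => det_apply' (ZisubA A i), Finset.prod_univ_sum,
      Fintype.piFinset_univ]
  have hterm : ∀ σ : Fin r → Perm (Fin n),
      (∏ i : Fin r, (((Equiv.Perm.sign (σ i) : ℤ) : MvR n r)
          * ∏ a : Fin n, (ZisubA A i) (σ i a) a))
        = (∏ i : Fin r, (Equiv.Perm.sign (σ i) : ℤ)) • ∏ a : Fin n, gfun A σ a := by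
    intro σ
    rw [Finset.prod_mul_distrib]
    rw [show (∏ i : Fin r, (((Equiv.Perm.sign (σ i) : ℤ) : MvR n r)))
        = (((∏ i : Fin r, (Equiv.Perm.sign (σ i) : ℤ)) : ℤ) : MvR n r) by push_cast; rfl]
    rw [← zsmul_eq_mul]
    congr 1
    rw [Finset.prod_comm]
    refine Finset.prod_congr rfl fun a _ => ?_
    rw [gfun]
    refine Finset.prod_congr rfl fun i _ => ?_
    simp only [ZisubA, Matrix.of_apply]
    by_cases h : σ i a = a
    · rw [if_pos h, if_pos h, h]
    · rw [if_neg h, if_neg h]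
  have hsplit : ∀ σ : Fin r → Perm (Fin n),
      opL (∏ a : Fin n, gfun A σ a) = ∏ a : Fin n, ((Dop a) ^ (r-1)) (gfun A σ a) := by
    intro σ
    have hG : ∀ (v : Fin n × Fin r) (a : Fin n), v.1 ≠ a → pderiv v (gfun A σ a) = 0 := by
      intro v a hva
      rw [gfun]
      refine pderiv_prod_zero v _ _ (fun i _ => ?_)
      by_cases h : σ i a = a
      · rw [if_pos h, map_sub, pderiv_X_of_ne (show ((a, i) : Fin n × Fin r) ≠ v by
          intro hh; exact hva (by rw [← hh])), pderiv_C, sub_zero]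
      · rw [if_neg h, zero_sub, map_neg, pderiv_C, neg_zero]
    rw [hopL, List.ofFn_eq_map,
      split_ops (r-1) (gfun A σ) hG (List.finRange n) (List.nodup_finRange n)]
    exact Finset.prod_congr rfl fun a _ => by rw [if_pos (List.mem_finRange a)]
  have hmain : ∀ σ : Fin r → Perm (Fin n),
      MvPolynomial.aeval (fun _ : Fin n × Fin r => (Polynomial.X : Polynomial ℂ))
        (opL (∏ i : Fin r, (((Equiv.Perm.sign (σ i) : ℤ) : MvR n r)
          * ∏ a : Fin n, (ZisubA A i) (σ i a) a)))
      = (((r-1).factorial : ℂ) ^ n) • ((∏ i : Fin r, (Equiv.Perm.sign (σ i) : ℤ))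
          • ∑ c : Fin n → Fin r, ∏ a : Fin n, ebar A σ (c a) a) := by
    intro σ
    rw [hterm σ, map_zsmul, map_zsmul, hsplit σ, map_prod]
    rw [Finset.prod_congr rfl fun a _ => key_lemma A hr σ a]
    rw [show ∏ a : Fin n, (((r - 1).factorial : ℂ) • ∑ i : Fin r, ebar A σ i a)
        = (((r-1).factorial : ℂ) ^ n) • ∏ a : Fin n, ∑ i : Fin r, ebar A σ i a by
      rw [Finset.prod_congr rfl fun a _ => Algebra.smul_def (((r-1).factorial : ℂ)) _,
        Finset.prod_mul_distrib, Finset.prod_const, Finset.card_univ, Fintype.card_fin,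
        ← map_pow, ← Algebra.smul_def]]
    rw [Finset.prod_univ_sum (fun _ : Fin n => (Finset.univ : Finset (Fin r)))
        (fun a i => ebar A σ i a), Fintype.piFinset_univ]
    rw [smul_comm]
  rw [hdet, map_sum, map_sum, Finset.sum_congr rfl fun σ _ => hmain σ]
  rw [← Finset.smul_sum, smul_smul,
    inv_mul_cancel₀ (pow_ne_zero n (Nat.cast_ne_zero.mpr (Nat.factorial_ne_zero (r-1)))),
    one_smul]
  exact Finset.sum_congr rfl fun σ _ => Finset.smul_sum

end SumPaving

/-- The sum of the characteristic polynomials of all `r`-pavings of `A` equals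
`(1/(r-1)!)^n Π_m (∂_{z_m^{(1)}} + ⋯ + ∂_{z_m^{(r)}})^{r-1}` applied to
`Π_i det(Z^{(i)} - A)`, with all `rn` variables then set equal to `x`. -/
theorem sum_paving_charpoly_eq_multivariate {n : ℕ} (r : ℕ) (hr : 1 ≤ r)
    (A : Matrix (Fin n) (Fin n) ℂ) :
    ∑ c : Fin n → Fin r, (paving A c).charpoly
      = (((r-1).factorial : ℂ) ^ n)⁻¹ •
        MvPolynomial.aeval (fun _ : Fin n × Fin r => (Polynomial.X : Polynomial ℂ))
          (((List.ofFn (fun m : Fin n => (∑ i : Fin r, pd (m, i)) ^ (r-1))).prod)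
            (∏ i : Fin r, (ZisubA A i).det)) := by
  rw [SumPaving.LHS_reduce, SumPaving.bridge]
  exact (SumPaving.RHS_reduce A hr).symm
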